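/- Let x′ > 0, λ < 0, y′ ∈ ℝ with 4(x′² + x′y′ − y′²) − 2λ² = −2, and set r′ = y′/x′. If 7x′ − 4y′ ≥ −2λ then x′²(24r′² − 64r′ + 41) ≥ 4; hence if (16 − √10)/12 < r′ < (16 + √10)/12 then 7x′ − 4y′ < −2λ. -/

import Mathlib

/-- With `x′ > 0`, `λ < 0`, `4(x′² + x′y′ − y′²) − 2λ² = −2` and `r′ = y′/x′`:
if `7x′ − 4y′ ≥ −2λ` then `x′²(24r′² − 64r′ + 41) ≥ 4`; hence if
`(16 − √10)/12 < r′ < (16 + √10)/12` then `7x′ − 4y′ < −2λ`. -/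
theorem iota2_slope_inequality (x' l y' r' : ℝ) (hx : 0 < x') (hl : l < 0)
    (heq : 4 * (x' ^ 2 + x' * y' - y' ^ 2) - 2 * l ^ 2 = -2) (hr : r' = y' / x') :
    (-2 * l ≤ 7 * x' - 4 * y' → 4 ≤ x' ^ 2 * (24 * r' ^ 2 - 64 * r' + 41)) ∧
    ((16 - Real.sqrt 10) / 12 < r' → r' < (16 + Real.sqrt 10) / 12 →
      7 * x' - 4 * y' < -2 * l) := by
  have hy : y' = r' * x' := by rw [hr, div_mul_cancel₀ y' hx.ne']
  subst hy
  have h1 : -2 * l ≤ 7 * x' - 4 * (r' * x') → 4 ≤ x' ^ 2 * (24 * r' ^ 2 - 64 * r' + 41) := by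
    intro h
    nlinarith [sq_nonneg l, sq_nonneg (7 * x' - 4 * (r' * x') + 2 * l),
      mul_pos (neg_pos.mpr hl) (neg_pos.mpr hl)]
  refine ⟨h1, fun hlo hhi => ?_⟩
  by_contra hc
  push_neg at hc
  have h2 := h1 hc
  have hs : Real.sqrt 10 ^ 2 = 10 := Real.sq_sqrt (by norm_num)
  have hq : 24 * r' ^ 2 - 64 * r' + 41 < 0 := by
    nlinarith [mul_pos (sub_pos.mpr hlo) (sub_pos.mpr hhi)]
  nlinarith [sq_nonneg x']
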